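/- For every real δ ≥ 2, the function x ↦ I_δ(x)/x is non-increasing on the interval (0, 1/2]; that is, for all 0 < x₁ ≤ x₂ ≤ 1/2 one has I_δ(x₂)/x₂ ≤ I_δ(x₁)/x₁. -/

import Mathlib

/-- `Idelta δ x` : for real `δ > 1` and `x ∈ (0, 1/2]`,
`I_δ(x) = inf{ y : 0 < y ≤ x and
  1 < x^{x(1−1/δ)}·(1−x)^{(1−x)(1−1/δ)}·(1−x−y)^{−(1−x−y)/2}·(x−y)^{−(x−y)/2}·y^{−y} }`. -/
noncomputable def Idelta (δ x : ℝ) : ℝ :=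
  sInf {y : ℝ | 0 < y ∧ y ≤ x ∧
    1 < x ^ (x * (1 - 1/δ)) * (1 - x) ^ ((1 - x) * (1 - 1/δ)) *
        (1 - x - y) ^ (-(1 - x - y)/2) * (x - y) ^ (-(x - y)/2) * y ^ (-y)}



open Real Set

set_option maxHeartbeats 1000000

noncomputable def Fa (a x y : ℝ) : ℝ :=
  negMulLog (x - y) / 2 + negMulLog (1 - x - y) / 2 + negMulLog y
    - a * (negMulLog x + negMulLog (1 - x))

/-- A concave function on an interval that is nonnegative at both endpoints is
nonnegative on the whole interval. -/
lemma concave_nonneg_on_Icc {f : ℝ → ℝ} {l r y : ℝ}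
    (hf : ConcaveOn ℝ (Icc l r) f) (hl : 0 ≤ f l) (hr : 0 ≤ f r) (hlr : l < r)
    (hy : y ∈ Icc l r) : 0 ≤ f y := by
  obtain ⟨h1, h2⟩ := hy
  have hd : (0:ℝ) < r - l := by linarith
  have hα : (0:ℝ) ≤ (r - y) / (r - l) := div_nonneg (by linarith) hd.le
  have hβ : (0:ℝ) ≤ (y - l) / (r - l) := div_nonneg (by linarith) hd.le
  have hαβ : (r - y)/(r-l) + (y-l)/(r-l) = 1 := by field_simp; ring
  have h := hf.2 (left_mem_Icc.2 hlr.le) (right_mem_Icc.2 hlr.le) hα hβ hαβ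
  simp only [smul_eq_mul] at h
  have hy' : (r - y)/(r-l) * l + (y - l)/(r-l) * r = y := by field_simp; ring
  rw [hy'] at h
  nlinarith [mul_nonneg hα hl, mul_nonneg hβ hr]

/-- Value of `Fa` at the peak `y = x (1-x)`. -/
lemma Fa_peak (a x : ℝ) : Fa a x (x*(1-x)) = (1-a) * (negMulLog x + negMulLog (1-x)) := by
  rw [Fa, show x - x*(1-x) = x*x from by ring,
      show 1 - x - x*(1-x) = (1-x)*(1-x) from by ring,
      negMulLog_mul, negMulLog_mul, negMulLog_mul]
  ring

lemma negMulLog_pos {x : ℝ} (h1 : 0 < x) (h2 : x < 1) : 0 < negMulLog x := by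
  have := log_neg h1 h2
  rw [negMulLog]
  nlinarith

lemma key_star {a u c : ℝ} (hu : 0 < u) (hu1 : u < 1) (huc : u ≤ c) (hc1 : c ≤ 1)
    (hlc : log c = (2*a - 1) * log u) :
    0 ≤ Fa a (1 - u) (u * (1 - c)) := by
  have hlu : log u < 0 := log_neg hu hu1
  have hlune : log u ≠ 0 := ne_of_lt hlu
  have hHnn : 0 ≤ negMulLog u + negMulLog (1 - u) :=
    add_nonneg (negMulLog_nonneg hu.le hu1.le)
      (negMulLog_nonneg (by linarith) (by linarith))
  set K : ℝ := -((negMulLog u + negMulLog (1-u)) / (2 * log u)) with hK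
  have hKnn : 0 ≤ K := by
    rw [hK, neg_nonneg]
    exact div_nonpos_iff.2 (Or.inl ⟨hHnn, by linarith⟩)
  clear_value K
  set Φ : ℝ → ℝ := fun z => negMulLog (u*z + (1 - 2*u)) / 2 + negMulLog (u*z) / 2
      + negMulLog (u - u*z) + K * log z
      - (negMulLog u + negMulLog (1-u))/2 with hΦ
  have hFaΦ : Fa a (1 - u) (u * (1 - c)) = Φ c := by
    rw [hΦ]
    simp only [Fa]
    rw [show 1 - u - u * (1 - c) = u*c + (1 - 2*u) from by ring,
        show 1 - (1 - u) - u * (1 - c) = u*c from by ring,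
        show (1:ℝ) - (1 - u) = u from by ring,
        show u * (1 - c) = u - u*c from by ring,
        hlc, hK]
    field_simp
    ring
  have hΦu : Φ u = 0 := by
    rw [hΦ]
    simp only
    rw [show u*u + (1 - 2*u) = (1-u)*(1-u) from by ring,
        show u - u*u = u*(1-u) from by ring,
        negMulLog_mul, negMulLog_mul, negMulLog_mul, hK]
    field_simp
    ring
  have hΦ1 : Φ 1 = 0 := by
    rw [hΦ]
    simp only
    rw [show u*(1:ℝ) + (1 - 2*u) = 1-u from by ring,
        show u - u*(1:ℝ) = 0 from by ring, mul_one, negMulLog_zero, log_one]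
    ring
  have hconc : ConcaveOn ℝ (Icc u 1) Φ := by
    constructor
    · exact convex_Icc _ _
    · intro p hp q hq α β hα hβ hαβ
      simp only [smul_eq_mul]
      obtain ⟨hp1, hp2⟩ := hp
      obtain ⟨hq1, hq2⟩ := hq
      have hup : 0 < u*p := mul_pos hu (lt_of_lt_of_le hu hp1)
      have huq : 0 < u*q := mul_pos hu (lt_of_lt_of_le hu hq1)
      -- part 1
      have m1p : u*p + (1 - 2*u) ∈ Ici (0:ℝ) := by
        simp only [mem_Ici]
        nlinarith [mul_le_mul_of_nonneg_left hp1 hu.le, sq_nonneg (1-u)]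
      have m1q : u*q + (1 - 2*u) ∈ Ici (0:ℝ) := by
        simp only [mem_Ici]
        nlinarith [mul_le_mul_of_nonneg_left hq1 hu.le, sq_nonneg (1-u)]
      have part1 := concaveOn_negMulLog.2 m1p m1q hα hβ hαβ
      simp only [smul_eq_mul] at part1
      rw [show α * (u*p + (1 - 2*u)) + β * (u*q + (1 - 2*u))
            = u*(α*p+β*q) + (1 - 2*u) from by linear_combination (1-2*u)*hαβ] at part1
      -- part 2
      have m2p : u*p ∈ Ici (0:ℝ) := le_of_lt hup
      have m2q : u*q ∈ Ici (0:ℝ) := le_of_lt huq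
      have part2 := concaveOn_negMulLog.2 m2p m2q hα hβ hαβ
      simp only [smul_eq_mul] at part2
      rw [show α * (u*p) + β * (u*q) = u*(α*p+β*q) from by ring] at part2
      -- part 3
      have m3p : u - u*p ∈ Ici (0:ℝ) := by
        simp only [mem_Ici]; nlinarith [mul_le_mul_of_nonneg_left hp2 hu.le]
      have m3q : u - u*q ∈ Ici (0:ℝ) := by
        simp only [mem_Ici]; nlinarith [mul_le_mul_of_nonneg_left hq2 hu.le]
      have part3 := concaveOn_negMulLog.2 m3p m3q hα hβ hαβ
      simp only [smul_eq_mul] at part3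
      rw [show α * (u - u*p) + β * (u - u*q) = u - u*(α*p+β*q) from by
            linear_combination u*hαβ] at part3
      -- part 4
      have m4p : p ∈ Ioi (0:ℝ) := lt_of_lt_of_le hu hp1
      have m4q : q ∈ Ioi (0:ℝ) := lt_of_lt_of_le hu hq1
      have part4 := strictConcaveOn_log_Ioi.concaveOn.2 m4p m4q hα hβ hαβ
      simp only [smul_eq_mul] at part4
      have part4' := mul_le_mul_of_nonneg_left part4 hKnn
      have hcs : α * ((negMulLog u + negMulLog (1-u))/2) + β * ((negMulLog u + negMulLog (1-u))/2)
          = (negMulLog u + negMulLog (1-u))/2 := by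
        linear_combination ((negMulLog u + negMulLog (1-u))/2) * hαβ
      simp only [hΦ]
      linarith [part1, part2, part3, part4', hcs]
  rw [hFaΦ]
  exact concave_nonneg_on_Icc hconc (le_of_eq hΦu.symm) (le_of_eq hΦ1.symm) hu1
    ⟨huc, hc1⟩

lemma key_ineq {a x y : ℝ} (ha1 : 1/2 ≤ a) (ha2 : a ≤ 1) (hx : 0 < x) (hx2 : x ≤ 1/2)
    (hy : 0 < y) (hyp : y ≤ x*(1-x)) (hF : 0 ≤ Fa a x y) :
    0 ≤ Fa a x y + log (1 - x - y) / 2 - a * log (1 - x) := by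
  have hx1 : x < 1 := by linarith
  have hu : (0:ℝ) < 1 - x := by linarith
  have hu1 : 1 - x < 1 := by linarith
  set c : ℝ := (1-x) ^ (2*a - 1) with hc
  have hcpos : 0 < c := rpow_pos_of_pos hu _
  have hlc : log c = (2*a - 1) * log (1 - x) := log_rpow hu _
  have hcu : 1 - x ≤ c := by
    calc 1 - x = (1-x) ^ (1:ℝ) := (rpow_one _).symm
    _ ≤ (1-x) ^ (2*a-1) := rpow_le_rpow_of_exponent_ge hu hu1.le (by linarith)
  have hc1 : c ≤ 1 := by
    calc c ≤ (1-x) ^ (0:ℝ) := rpow_le_rpow_of_exponent_ge hu hu1.le (by linarith)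
    _ = 1 := rpow_zero _
  set y₀ : ℝ := (1-x) * (1 - c) with hy₀
  have hy₀p : y₀ ≤ x * (1-x) := by nlinarith
  have huc : 1 - x - y₀ = (1-x)*c := by rw [hy₀]; ring
  have hQ0 : log ((1-x)*c) / 2 - a * log (1-x) = 0 := by
    rw [log_mul (ne_of_gt hu) (ne_of_gt hcpos), hlc]; ring
  rcases le_or_gt y y₀ with hcase | hcase
  · have h1 : (1-x)*c ≤ 1 - x - y := by rw [← huc]; linarith
    have h2 : log ((1-x)*c) ≤ log (1 - x - y) :=
      log_le_log (mul_pos hu hcpos) h1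
    linarith
  · -- concavity case on [y₀, x(1-x)]
    have hy₀lt : y₀ < x*(1-x) := lt_of_lt_of_le hcase hyp
    have hy₀nn : 0 ≤ y₀ := by nlinarith
    set G : ℝ → ℝ := fun z => negMulLog (x - z)/2 + negMulLog (1 - x - z)/2
        + negMulLog z + log (1 - x - z)/2
        - a*(negMulLog x + negMulLog (1-x)) - a * log (1-x) with hG
    have hGy : G y = Fa a x y + log (1 - x - y) / 2 - a * log (1 - x) := by
      rw [hG]; simp only [Fa]; ring
    have hconc : ConcaveOn ℝ (Icc y₀ (x*(1-x))) G := by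
      constructor
      · exact convex_Icc _ _
      · intro p hp q hq α β hα hβ hαβ
        simp only [smul_eq_mul]
        obtain ⟨hp1, hp2⟩ := hp
        obtain ⟨hq1, hq2⟩ := hq
        have hxp : 0 ≤ x - p := by nlinarith
        have hxq : 0 ≤ x - q := by nlinarith
        have h1p : 0 < 1 - x - p := by nlinarith
        have h1q : 0 < 1 - x - q := by nlinarith
        have part1 := concaveOn_negMulLog.2 (mem_Ici.2 hxp) (mem_Ici.2 hxq) hα hβ hαβ
        simp only [smul_eq_mul] at part1
        rw [show α * (x - p) + β * (x - q) = x - (α*p+β*q) from by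
              linear_combination x*hαβ] at part1
        have part2 := concaveOn_negMulLog.2 (mem_Ici.2 h1p.le) (mem_Ici.2 h1q.le) hα hβ hαβ
        simp only [smul_eq_mul] at part2
        rw [show α * (1 - x - p) + β * (1 - x - q) = 1 - x - (α*p+β*q) from by
              linear_combination (1-x)*hαβ] at part2
        have part3 := concaveOn_negMulLog.2 (mem_Ici.2 (le_trans hy₀nn hp1))
          (mem_Ici.2 (le_trans hy₀nn hq1)) hα hβ hαβ
        simp only [smul_eq_mul] at part3
        have part4 := strictConcaveOn_log_Ioi.concaveOn.2 (mem_Ioi.2 h1p) (mem_Ioi.2 h1q)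
          hα hβ hαβ
        simp only [smul_eq_mul] at part4
        rw [show α * (1 - x - p) + β * (1 - x - q) = 1 - x - (α*p+β*q) from by
              linear_combination (1-x)*hαβ] at part4
        have hcs : α * (a*(negMulLog x + negMulLog (1-x)) + a*log (1-x))
            + β * (a*(negMulLog x + negMulLog (1-x)) + a*log (1-x))
            = a*(negMulLog x + negMulLog (1-x)) + a*log (1-x) := by
          linear_combination (a*(negMulLog x + negMulLog (1-x)) + a*log (1-x)) * hαβ
        simp only [hG]
        linarith [part1, part2, part3, part4, hcs]
    have hGy₀ : 0 ≤ G y₀ := by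
      have hstar := key_star (a := a) hu hu1 hcu hc1 hlc
      rw [show (1:ℝ) - (1-x) = x from by ring] at hstar
      have : G y₀ = Fa a x ((1-x)*(1-c)) + (log ((1-x)*c) / 2 - a * log (1-x)) := by
        rw [hG]; simp only [Fa]
        rw [show 1 - x - y₀ = (1-x)*c from huc, hy₀]
        ring
      rw [this, hQ0]
      linarith
    have hGp : 0 ≤ G (x*(1-x)) := by
      have hlxx : log x ≤ log (1-x) := log_le_log hx (by linarith)
      have hval : G (x*(1-x)) = (1-a)*x*(log (1-x) - log x) := by
        rw [hG]
        simp only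
        rw [show x - x*(1-x) = x*x from by ring,
            show 1 - x - x*(1-x) = (1-x)*(1-x) from by ring]
        simp only [negMulLog]
        rw [log_mul (ne_of_gt hx) (ne_of_gt hx),
            log_mul (ne_of_gt hu) (ne_of_gt hu),
            log_mul (ne_of_gt hx) (ne_of_gt hu)]
        ring
      rw [hval]
      have h1a : 0 ≤ (1-a) := by linarith
      exact mul_nonneg (mul_nonneg h1a hx.le) (sub_nonneg.2 hlxx)
    have := concave_nonneg_on_Icc hconc hGy₀ hGp hy₀lt ⟨hcase.le, hyp⟩
    linarith [hGy ▸ this]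

lemma hasDerivAt_phi {a t x : ℝ} (h1 : x - t*x ≠ 0) (h2 : 1 - x - t*x ≠ 0) (h3 : t*x ≠ 0)
    (h4 : x ≠ 0) (h5 : 1 - x ≠ 0) :
    HasDerivAt (fun z => Fa a z (t*z))
      ((-log (x - t*x) - 1) * (1 - t) / 2 + (-log (1 - x - t*x) - 1) * (-1 - t) / 2
        + (-log (t*x) - 1) * t - a * ((-log x - 1) + (-log (1-x) - 1) * (-1))) x := by
  have i1 : HasDerivAt (fun z : ℝ => z - t * z) (1 - t) x := by
    have := (hasDerivAt_id' x).sub ((hasDerivAt_id' x).const_mul t)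
    simp only [mul_one] at this
    exact this
  have i2 : HasDerivAt (fun z : ℝ => 1 - z - t * z) (-1 - t) x := by
    have := ((hasDerivAt_id' x).const_sub 1).sub ((hasDerivAt_id' x).const_mul t)
    simp only [mul_one] at this
    exact this
  have i3 : HasDerivAt (fun z : ℝ => t * z) t x := by
    simpa using (hasDerivAt_id x).const_mul t
  have i5 : HasDerivAt (fun z : ℝ => 1 - z) (-1) x := by
    simpa using (hasDerivAt_id x).const_sub 1
  have d1 : HasDerivAt (fun z : ℝ => negMulLog (z - t*z)) ((-log (x - t*x) - 1) * (1 - t)) x :=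
    by have := (hasDerivAt_negMulLog h1).comp x i1; exact this
  have d2 : HasDerivAt (fun z : ℝ => negMulLog (1 - z - t*z))
      ((-log (1 - x - t*x) - 1) * (-1 - t)) x :=
    by have := (hasDerivAt_negMulLog h2).comp x i2; exact this
  have d3 : HasDerivAt (fun z : ℝ => negMulLog (t*z)) ((-log (t*x) - 1) * t) x :=
    (hasDerivAt_negMulLog h3).comp x i3
  have d4 : HasDerivAt (fun z : ℝ => negMulLog z) (-log x - 1) x := hasDerivAt_negMulLog h4
  have d5 : HasDerivAt (fun z : ℝ => negMulLog (1 - z)) ((-log (1-x) - 1) * (-1)) x :=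
    (hasDerivAt_negMulLog h5).comp x i5
  exact (((d1.div_const 2).add (d2.div_const 2)).add d3).sub ((d4.add d5).const_mul a)

lemma flow {a t x₁ x₂ : ℝ} (ha1 : 1/2 ≤ a) (ha2 : a ≤ 1) (hx₁ : 0 < x₁) (h12 : x₁ ≤ x₂)
    (hx₂ : x₂ ≤ 1/2) (ht : 0 < t) (ht2 : x₂ ≤ 1 - t) (hF : 0 < Fa a x₁ (t*x₁)) :
    0 < Fa a x₂ (t*x₂) := by
  have ht1 : t < 1 := by linarith
  have hcont : Continuous (fun z : ℝ => Fa a z (t*z)) := by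
    simp only [Fa]; fun_prop
  by_contra hcon
  push_neg at hcon
  set U : Set ℝ := Icc x₁ x₂ ∩ (fun z => Fa a z (t*z)) ⁻¹' Iic 0 with hU
  have hUclosed : IsClosed U := isClosed_Icc.inter (isClosed_Iic.preimage hcont)
  have hUne : U.Nonempty := ⟨x₂, ⟨⟨h12, le_refl x₂⟩, by simpa using hcon⟩⟩
  have hUb : BddBelow U := ⟨x₁, fun z hz => hz.1.1⟩
  have hsU : sInf U ∈ U := hUclosed.csInf_mem hUne hUb
  obtain ⟨⟨hs1, hs2⟩, hφs⟩ := hsU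
  simp only [mem_preimage, mem_Iic] at hφs
  have hx₁s : x₁ < sInf U := by
    rcases lt_or_eq_of_le hs1 with h | h
    · exact h
    · rw [← h] at hφs; linarith
  have hpos : ∀ z ∈ Ico x₁ (sInf U), 0 < Fa a z (t*z) := by
    intro z hz
    by_contra h
    push_neg at h
    have hzU : z ∈ U := ⟨⟨hz.1, le_trans hz.2.le hs2⟩, by simpa using h⟩
    exact absurd hz.2 (not_lt.2 (csInf_le hUb hzU))
  have hmono : MonotoneOn (fun z => Fa a z (t*z)) (Icc x₁ (sInf U)) := by
    apply monotoneOn_of_deriv_nonneg (convex_Icc _ _) hcont.continuousOn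
    · intro z hz
      rw [interior_Icc] at hz
      obtain ⟨hz1, hz2⟩ := hz
      have hz0 : 0 < z := lt_trans hx₁ hz1
      have hzx₂ : z < x₂ := lt_of_lt_of_le hz2 hs2
      have h1 : 0 < z - t*z := by nlinarith
      have h2 : 0 < 1 - z - t*z := by nlinarith
      exact (hasDerivAt_phi (a := a) (ne_of_gt h1) (ne_of_gt h2)
        (ne_of_gt (mul_pos ht hz0)) (ne_of_gt hz0)
        (ne_of_gt (by linarith : (0:ℝ) < 1 - z))).differentiableAt.differentiableWithinAt
    · intro z hz
      rw [interior_Icc] at hz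
      obtain ⟨hz1, hz2⟩ := hz
      have hz0 : 0 < z := lt_trans hx₁ hz1
      have hzx₂ : z < x₂ := lt_of_lt_of_le hz2 hs2
      have hz12 : z ≤ 1/2 := le_of_lt (lt_of_lt_of_le hzx₂ hx₂)
      have htz : 0 < t*z := mul_pos ht hz0
      have h1 : 0 < z - t*z := by nlinarith
      have h2 : 0 < 1 - z - t*z := by nlinarith
      have hd := hasDerivAt_phi (a := a) (ne_of_gt h1) (ne_of_gt h2) (ne_of_gt htz)
        (ne_of_gt hz0) (ne_of_gt (by linarith : (0:ℝ) < 1 - z))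
      rw [hd.deriv]
      have hφz : 0 ≤ Fa a z (t*z) := (hpos z ⟨hz1.le, hz2⟩).le
      have htlez : t*z ≤ z*(1-z) := by nlinarith
      have hk := key_ineq ha1 ha2 hz0 hz12 htz htlez hφz
      have hxE : z * ((-log (z - t*z) - 1) * (1 - t) / 2
          + (-log (1 - z - t*z) - 1) * (-1 - t) / 2
          + (-log (t*z) - 1) * t - a * ((-log z - 1) + (-log (1-z) - 1) * (-1)))
          = Fa a z (t*z) + log (1 - z - t*z) / 2 - a * log (1 - z) := by
        simp only [Fa, negMulLog]; ring
      nlinarith [hk, hxE, hz0]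
  have hfin := hmono (left_mem_Icc.2 hx₁s.le) (right_mem_Icc.2 hx₁s.le) hx₁s.le
  simp only at hfin
  linarith

lemma transfer {a x₁ x₂ y₁ : ℝ} (ha1 : 1/2 ≤ a) (ha2 : a < 1) (hx₁ : 0 < x₁)
    (h12 : x₁ ≤ x₂) (hx₂ : x₂ ≤ 1/2) (hy₁ : 0 < y₁) (hy₁x : y₁ ≤ x₁)
    (hF : 0 < Fa a x₁ y₁) :
    ∃ y₂, 0 < y₂ ∧ y₂ ≤ x₂ ∧ y₂ * x₁ ≤ y₁ * x₂ ∧ 0 < Fa a x₂ y₂ := by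
  have hx₂0 : 0 < x₂ := lt_of_lt_of_le hx₁ h12
  have hx₁1 : x₁ < 1 := by linarith
  have hx₂1 : x₂ < 1 := by linarith
  set yb := min y₁ (x₁*(1-x₁)) with hyb
  have hyb0 : 0 < yb := lt_min hy₁ (by nlinarith)
  have hybp : yb ≤ x₁*(1-x₁) := min_le_right _ _
  have hyby : yb ≤ y₁ := min_le_left _ _
  have hFb : 0 < Fa a x₁ yb := by
    rcases le_total y₁ (x₁*(1-x₁)) with h | h
    · rwa [hyb, min_eq_left h]
    · rw [hyb, min_eq_right h, Fa_peak]
      have hH : 0 < negMulLog x₁ + negMulLog (1-x₁) :=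
        add_pos (negMulLog_pos hx₁ hx₁1) (negMulLog_pos (by linarith) (by linarith))
      nlinarith
  set t := yb / x₁ with hts
  have ht : 0 < t := div_pos hyb0 hx₁
  have htx₁ : t * x₁ = yb := by rw [hts]; field_simp
  have htle : t ≤ 1 - x₁ := by
    rw [hts, div_le_iff₀ hx₁]
    nlinarith
  rcases le_or_gt x₂ (1 - t) with hc | hc
  · refine ⟨t * x₂, mul_pos ht hx₂0, by nlinarith, ?_, ?_⟩
    · have he : t * x₂ * x₁ = yb * x₂ := by rw [hts]; field_simp
      nlinarith
    · apply flow ha1 ha2.le hx₁ h12 hx₂ ht hc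
      rwa [htx₁]
  · refine ⟨x₂*(1-x₂), by nlinarith, by nlinarith, ?_, ?_⟩
    · have h1 : (1-x₂)*x₁ < yb := by
        calc (1-x₂)*x₁ < t*x₁ := by nlinarith
        _ = yb := htx₁
      nlinarith
    · rw [Fa_peak]
      have hH : 0 < negMulLog x₂ + negMulLog (1-x₂) :=
        add_pos (negMulLog_pos hx₂0 hx₂1) (negMulLog_pos (by linarith) (by linarith))
      nlinarith

lemma rpow_eq_exp_of {b e : ℝ} (hb : 0 ≤ b) (h : b = 0 → e = 0) :
    b ^ e = exp (e * log b) := by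
  rcases eq_or_lt_of_le hb with h0 | h0
  · rw [← h0, h h0.symm]
    simp
  · rw [rpow_def_of_pos h0, mul_comm]

lemma mem_S_iff {δ x y : ℝ} (hδ : 2 ≤ δ) (hx : 0 < x) (hx2 : x ≤ 1/2) (hy : 0 < y)
    (hyx : y ≤ x) :
    (1 < x ^ (x * (1 - 1/δ)) * (1 - x) ^ ((1 - x) * (1 - 1/δ)) *
        (1 - x - y) ^ (-(1 - x - y)/2) * (x - y) ^ (-(x - y)/2) * y ^ (-y))
    ↔ 0 < Fa (1 - 1/δ) x y := by
  have hx1 : (0:ℝ) < 1 - x := by linarith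
  have h1 : x ^ (x * (1 - 1/δ)) = exp ((x * (1 - 1/δ)) * log x) :=
    rpow_eq_exp_of hx.le (fun h => absurd h (ne_of_gt hx))
  have h2 : (1 - x) ^ ((1 - x) * (1 - 1/δ)) = exp (((1 - x) * (1 - 1/δ)) * log (1 - x)) :=
    rpow_eq_exp_of hx1.le (fun h => absurd h (ne_of_gt hx1))
  have h3 : (1 - x - y) ^ (-(1 - x - y)/2) = exp ((-(1 - x - y)/2) * log (1 - x - y)) :=
    rpow_eq_exp_of (by linarith) (fun h => by rw [h]; norm_num)
  have h4 : (x - y) ^ (-(x - y)/2) = exp ((-(x - y)/2) * log (x - y)) :=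
    rpow_eq_exp_of (by linarith) (fun h => by rw [h]; norm_num)
  have h5 : y ^ (-y) = exp ((-y) * log y) :=
    rpow_eq_exp_of hy.le (fun h => absurd h (ne_of_gt hy))
  rw [h1, h2, h3, h4, h5, ← exp_add, ← exp_add, ← exp_add, ← exp_add, one_lt_exp_iff]
  have he : x * (1 - 1/δ) * log x + (1 - x) * (1 - 1/δ) * log (1 - x)
      + -(1 - x - y)/2 * log (1 - x - y) + -(x - y)/2 * log (x - y) + -y * log y
      = Fa (1 - 1/δ) x y := by
    simp only [Fa, negMulLog]; ring
  rw [he]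


/-- For every real `δ ≥ 2`, the function `x ↦ I_δ(x)/x` is non-increasing on `(0, 1/2]`. -/
theorem stmt1 (δ : ℝ) (hδ : 2 ≤ δ) (x₁ x₂ : ℝ)
    (h0 : 0 < x₁) (h12 : x₁ ≤ x₂) (h2 : x₂ ≤ 1/2) :
    Idelta δ x₂ / x₂ ≤ Idelta δ x₁ / x₁ := by
  have hδ0 : (0:ℝ) < δ := by linarith
  have hd1 : 0 < 1/δ := by positivity
  have ha1 : 1/2 ≤ 1 - 1/δ := by
    have h : 1/δ ≤ 1/2 := by
      rw [div_le_div_iff₀ hδ0 (by norm_num : (0:ℝ) < 2)]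
      linarith
    linarith
  have ha2 : 1 - 1/δ < 1 := by linarith
  have hx₂0 : 0 < x₂ := lt_of_lt_of_le h0 h12
  have hx₁2 : x₁ ≤ 1/2 := le_trans h12 h2
  have hx₁1 : x₁ < 1 := by linarith
  set S₁ : Set ℝ := {y : ℝ | 0 < y ∧ y ≤ x₁ ∧
    1 < x₁ ^ (x₁ * (1 - 1/δ)) * (1 - x₁) ^ ((1 - x₁) * (1 - 1/δ)) *
        (1 - x₁ - y) ^ (-(1 - x₁ - y)/2) * (x₁ - y) ^ (-(x₁ - y)/2) * y ^ (-y)} with hS₁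
  set S₂ : Set ℝ := {y : ℝ | 0 < y ∧ y ≤ x₂ ∧
    1 < x₂ ^ (x₂ * (1 - 1/δ)) * (1 - x₂) ^ ((1 - x₂) * (1 - 1/δ)) *
        (1 - x₂ - y) ^ (-(1 - x₂ - y)/2) * (x₂ - y) ^ (-(x₂ - y)/2) * y ^ (-y)} with hS₂
  have hI₁ : Idelta δ x₁ = sInf S₁ := rfl
  have hI₂ : Idelta δ x₂ = sInf S₂ := rfl
  have hp₁0 : 0 < x₁ * (1 - x₁) := by nlinarith
  have hp₁x : x₁ * (1 - x₁) ≤ x₁ := by nlinarith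
  have hFp₁ : 0 < Fa (1 - 1/δ) x₁ (x₁*(1-x₁)) := by
    rw [Fa_peak]
    have hH : 0 < negMulLog x₁ + negMulLog (1-x₁) :=
      add_pos (negMulLog_pos h0 hx₁1) (negMulLog_pos (by linarith) (by linarith))
    nlinarith
  have hne₁ : S₁.Nonempty :=
    ⟨x₁*(1-x₁), hp₁0, hp₁x, (mem_S_iff hδ h0 hx₁2 hp₁0 hp₁x).2 hFp₁⟩
  have hbdd₂ : BddBelow S₂ := ⟨0, fun z hz => hz.1.le⟩
  have hkey : ∀ y ∈ S₁, sInf S₂ * x₁ ≤ y * x₂ := by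
    intro y hy
    obtain ⟨hy0, hyx, hyP⟩ := hy
    have hFy : 0 < Fa (1 - 1/δ) x₁ y := (mem_S_iff hδ h0 hx₁2 hy0 hyx).1 hyP
    obtain ⟨y₂, h20, h2x, h2le, h2F⟩ := transfer ha1 ha2 h0 h12 h2 hy0 hyx hFy
    have hmem : y₂ ∈ S₂ := ⟨h20, h2x, (mem_S_iff hδ hx₂0 h2 h20 h2x).2 h2F⟩
    have hinf : sInf S₂ ≤ y₂ := csInf_le hbdd₂ hmem
    nlinarith
  have hfin : sInf S₂ * x₁ / x₂ ≤ sInf S₁ := by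
    apply le_csInf hne₁
    intro y hy
    have h := hkey y hy
    rw [div_le_iff₀ hx₂0]
    linarith
  rw [hI₁, hI₂, div_le_div_iff₀ hx₂0 h0]
  calc sInf S₂ * x₁ = (sInf S₂ * x₁ / x₂) * x₂ := by field_simp
  _ ≤ sInf S₁ * x₂ := by nlinarith
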